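/- arXiv:math/0605306 — 3 statements merged into one kernel-verified Lean document; each statement's English description precedes it below -/
import Mathlib

section
/- Let ρ and σ be two well agreeing near weights on R and let f ∈ R \ {0}. Then there exists g ∈ M_ρ such that fg ∈ M_ρ. -/
structure NearWeight (F R : Type*) [Field F] [CommRing R] [Algebra F R] where
  w : R → WithBot ℕ
  N0 : ∀ f : R, w f = ⊥ ↔ f = 0
  N1 : ∀ (c : F) (f : R), c ≠ 0 → w (c • f) = w f
  N2 : ∀ f g : R, w (f + g) ≤ max (w f) (w g)
  N3 : ∀ f g h : R, w f < w g → w (f * h) ≤ w (g * h)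
  N3' : ∀ f g h : R, w f < w g → w 1 < w h → w (f * h) < w (g * h)
  N4 : ∀ f g : R, w 1 < w f → w 1 < w g → w f = w g →
      ∃ c : F, c ≠ 0 ∧ w (f - c • g) < w f
  N5 : ∀ f g : R, w (f * g) ≤ w f + w g
  N5' : ∀ f g : R, w 1 < w f → w 1 < w g → w (f * g) = w f + w g
  norm0 : ∀ f : R, f ≠ 0 → w f ≤ w 1 → w f = 0
  normgcd : ∀ d : ℕ, (∀ f : R, w 1 < w f → ∃ k : ℕ, w f = ((d * k : ℕ) : WithBot ℕ)) → d = 1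

namespace NearWeight

variable {F R : Type*} [Field F] [CommRing R] [Algebra F R]

def U (ρ : NearWeight F R) : Set R := {r | ρ.w r ≤ ρ.w 1}

def M (ρ : NearWeight F R) : Set R := {r | ρ.w 1 < ρ.w r}

def nval (ρ : NearWeight F R) (f : R) : ℕ := WithBot.unbotD 0 (ρ.w f)

def Hset (ρ σ : NearWeight F R) (S : Set R) : Set (ℕ × ℕ) :=
  {p | ∃ f ∈ S, f ≠ 0 ∧ (ρ.nval f, σ.nval f) = p}

def WellAgreeing (ρ σ : NearWeight F R) : Prop :=
  (Hset ρ σ Set.univ)ᶜ.Finite ∧ ρ.U ∩ σ.U = Set.range (algebraMap F R)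

noncomputable def xH (ρ σ : NearWeight F R) (n : ℕ) : ℕ :=
  sInf {m | (m, n) ∈ Hset ρ σ Set.univ}

noncomputable def yH (ρ σ : NearWeight F R) (n : ℕ) : ℕ :=
  sInf {m | (n, m) ∈ Hset ρ σ Set.univ}

def lub (a b : ℕ × ℕ) : ℕ × ℕ := (max a.1 b.1, max a.2 b.2)

noncomputable def Gamma (ρ σ : NearWeight F R) : Set (ℕ × ℕ) :=
  {p | ∃ m : ℕ, p = (m, yH ρ σ m)} ∪ {p | ∃ n : ℕ, p = (xH ρ σ n, n)}

def Hbarx (ρ σ : NearWeight F R) : Set ℕ := {m | (m, 0) ∈ Hset ρ σ Set.univ}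

def Hbary (ρ σ : NearWeight F R) : Set ℕ := {n | (0, n) ∈ Hset ρ σ Set.univ}

noncomputable def GammaTilde (ρ σ : NearWeight F R) : Set (ℕ × ℕ) :=
  {p | ∃ m : ℕ, m ∉ Hbarx ρ σ ∧ p = (m, yH ρ σ m)}

def Delta (p : ℕ × ℕ) : Set (ℕ × ℕ) :=
  {q | (q.1 = p.1 ∧ q.2 < p.2) ∨ (q.2 = p.2 ∧ q.1 < p.1)}

noncomputable def tw (ρ : NearWeight F R) (f : R) : ℤ :=
  sInf {z : ℤ | ∃ g ∈ ρ.M, z = (ρ.nval (f * g) : ℤ) - (ρ.nval g : ℤ)}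

end NearWeight

variable {F R : Type*} [Field F] [CommRing R] [Algebra F R]

/-- For nonzero `x`, the weight is the coercion of `nval x`. -/
lemma NearWeight.wval (τ : NearWeight F R) {x : R} (hx : x ≠ 0) :
    τ.w x = (τ.nval x : WithBot ℕ) := by
  have hb : τ.w x ≠ ⊥ := fun h => hx ((τ.N0 x).mp h)
  obtain ⟨n, hn⟩ := WithBot.ne_bot_iff_exists.mp hb
  unfold NearWeight.nval
  rw [← hn]
  simp only [WithBot.unbotD_coe]
  exact_mod_cast rfl

lemma NearWeight.w_one (τ : NearWeight F R) (h1 : (1 : R) ≠ 0) : τ.w 1 = 0 :=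
  τ.norm0 1 h1 le_rfl

lemma NearWeight.w_neg (τ : NearWeight F R) (x : R) : τ.w (-x) = τ.w x := by
  have h := τ.N1 (-1 : F) x (by norm_num)
  rwa [neg_one_smul] at h

lemma NearWeight.w_add_eq (τ : NearWeight F R) {a b : R} (h : τ.w a < τ.w b) :
    τ.w (a + b) = τ.w b := by
  refine le_antisymm ((τ.N2 a b).trans (max_le h.le le_rfl)) ?_
  have h2 := τ.N2 (a + b) (-a)
  rw [NearWeight.w_neg] at h2
  have hab : a + b + -a = b := by ring
  rw [hab] at h2
  rcases le_max_iff.mp h2 with h' | h'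
  · exact h'
  · exact absurd h (not_lt.mpr h')

lemma NearWeight.w_sub_eq (τ : NearWeight F R) {a b : R} (h : τ.w a < τ.w b) :
    τ.w (a - b) = τ.w b := by
  have h' : τ.w a < τ.w (-b) := by rwa [NearWeight.w_neg]
  have := τ.w_add_eq h'
  rw [NearWeight.w_neg] at this
  rwa [sub_eq_add_neg]

theorem stmt16
    (hinj : Function.Injective (algebraMap F R))
    (hsur : ¬ Function.Surjective (algebraMap F R))
    (ρ σ : NearWeight F R) (hwa : NearWeight.WellAgreeing ρ σ)
    (f : R) (hf : f ≠ 0) :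
    ∃ g ∈ ρ.M, f * g ∈ ρ.M := by
  -- R is nontrivial
  have h1 : (1 : R) ≠ 0 := by
    intro h
    apply hsur
    intro r
    exact ⟨0, by simp [show r = 0 by calc r = r * 1 := by ring
                                        _ = 0 := by rw [h, mul_zero]]⟩
  have hρ1 : ρ.w 1 = 0 := ρ.w_one h1
  have hσ1 : σ.w 1 = 0 := σ.w_one h1
  -- find u ∈ M_ρ with σ.w u = 0
  have hTfin : {m : ℕ | (m, (0 : ℕ)) ∉ NearWeight.Hset ρ σ Set.univ}.Finite := by
    have heq : {m : ℕ | (m, (0 : ℕ)) ∉ NearWeight.Hset ρ σ Set.univ}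
        = (fun m : ℕ => (m, (0 : ℕ))) ⁻¹' (NearWeight.Hset ρ σ Set.univ)ᶜ := rfl
    rw [heq]
    exact Set.Finite.preimage
      (Function.Injective.injOn (fun a b hab => by simpa using congrArg Prod.fst hab)) hwa.1
  obtain ⟨m, hm, hm0⟩ :=
    (Set.Finite.infinite_compl hTfin).exists_gt 0
  have hmH : (m, (0 : ℕ)) ∈ NearWeight.Hset ρ σ Set.univ := not_not.mp hm
  obtain ⟨u, -, hu0, huv⟩ := hmH
  have hnvu : ρ.nval u = m := (Prod.mk.injEq _ _ _ _).mp huv |>.1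
  have hnsu : σ.nval u = 0 := (Prod.mk.injEq _ _ _ _).mp huv |>.2
  have hwu : ρ.w u = (m : WithBot ℕ) := by rw [ρ.wval hu0, hnvu]
  have hσu : σ.w u = 0 := by rw [σ.wval hu0, hnsu]; rfl
  have huM : u ∈ ρ.M := by
    show ρ.w 1 < ρ.w u
    rw [hρ1, hwu]
    exact_mod_cast hm0
  -- the weight of f
  rcases lt_or_ge (ρ.w 1) (ρ.w f) with hfM | hfU
  · -- f ∈ M_ρ : take g = u
    refine ⟨u, huM, ?_⟩
    show ρ.w 1 < ρ.w (f * u)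
    rw [ρ.N5' f u hfM huM, hρ1]
    have hff : ρ.w f = (ρ.nval f : WithBot ℕ) := ρ.wval hf
    rw [hff, hwu, ← Nat.cast_add]
    have : 0 < ρ.nval f := by
      have := hfM; rw [hρ1, hff] at this; exact_mod_cast this
    exact_mod_cast Nat.add_pos_left this m
  have hρf : ρ.w f = 0 := ρ.norm0 f hf (hρ1 ▸ hfU)
  rcases lt_or_ge (σ.w 1) (σ.w f) with hσf | hσfU
  swap
  · -- f ∈ U_ρ ∩ U_σ = F·1
    have hmem : f ∈ Set.range (algebraMap F R) := by
      rw [← hwa.2]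
      exact ⟨le_of_le_of_eq (hρf ▸ le_rfl) hρ1.symm, hσfU⟩
    obtain ⟨c, hc⟩ := hmem
    have hc0 : c ≠ 0 := by rintro rfl; simp at hc; exact hf hc.symm
    refine ⟨u, huM, ?_⟩
    have hfu : f * u = c • u := by rw [← hc, Algebra.smul_def]
    show ρ.w 1 < ρ.w (f * u)
    rw [hfu, ρ.N1 c u hc0]
    exact huM
  -- Main case: ρ.w f = 0, σ.w 1 < σ.w f
  -- multiplication by f is σ-nondecreasing, in particular f is regular
  have hmul : ∀ g : R, g ≠ 0 → f * g ≠ 0 ∧ σ.w g ≤ σ.w (f * g) := by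
    intro g hg
    have h3 := σ.N3 1 f g hσf
    rw [one_mul] at h3
    refine ⟨?_, h3⟩
    intro h0
    rw [h0, (σ.N0 0).mpr rfl, le_bot_iff, σ.N0] at h3
    exact hg h3
  by_contra hcon
  push_neg at hcon
  -- helper : membership in M gives nonzero
  have hMne : ∀ g : R, g ∈ ρ.M → g ≠ 0 := by
    intro g hg h0
    have : ρ.w 1 < ρ.w g := hg
    rw [h0, (ρ.N0 0).mpr rfl] at this
    exact not_lt_bot this
  have key : ∀ n : ℕ, ∀ g : R, g ∈ ρ.M → σ.nval (f * g) = n → False := by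
    intro n
    induction n using Nat.strong_induction_on with
    | _ n ih =>
      intro g hgM hn
      have hgne : g ≠ 0 := hMne g hgM
      obtain ⟨hfg_ne, -⟩ := hmul g hgne
      have hρfg : ρ.w (f * g) = 0 := by
        have hnot := hcon g hgM
        have hle : ρ.w (f * g) ≤ ρ.w 1 := not_lt.mp hnot
        exact ρ.norm0 _ hfg_ne hle
      by_cases hn0 : n = 0
      · -- f*g ∈ U_ρ ∩ U_σ = F·1
        have hσfg : σ.w (f * g) = 0 := by
          rw [σ.wval hfg_ne, hn, hn0]; rfl
        have hmem : f * g ∈ Set.range (algebraMap F R) := by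
          rw [← hwa.2]
          exact ⟨le_of_le_of_eq (hρfg ▸ le_rfl) hρ1.symm,
                 le_of_le_of_eq (hσfg ▸ le_rfl) hσ1.symm⟩
        obtain ⟨c, hc⟩ := hmem
        have hc0 : c ≠ 0 := by rintro rfl; simp at hc; exact hfg_ne hc.symm
        have hggM : g * g ∈ ρ.M := by
          show ρ.w 1 < ρ.w (g * g)
          rw [ρ.N5' g g hgM hgM, hρ1]
          have hwg : ρ.w g = (ρ.nval g : WithBot ℕ) := ρ.wval hgne
          have hpos : 0 < ρ.nval g := by
            have h' : ρ.w 1 < ρ.w g := hgM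
            rw [hρ1, hwg] at h'
            exact_mod_cast h'
          rw [hwg, ← Nat.cast_add]
          exact_mod_cast Nat.add_pos_left hpos _
        apply hcon (g * g) hggM
        show ρ.w 1 < ρ.w (f * (g * g))
        have hrw : f * (g * g) = c • g := by
          rw [← mul_assoc, ← hc, Algebra.smul_def]
        rw [hrw, ρ.N1 c g hc0]
        exact hgM
      · -- n > 0 : descent step
        have hnpos : 0 < n := Nat.pos_of_ne_zero hn0
        set h := g * u with hhdef
        have hhM : h ∈ ρ.M := by
          show ρ.w 1 < ρ.w (g * u)
          rw [ρ.N5' g u hgM huM, hρ1]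
          have hwg : ρ.w g = (ρ.nval g : WithBot ℕ) := ρ.wval hgne
          have hpos : 0 < ρ.nval g := by
            have h' : ρ.w 1 < ρ.w g := hgM
            rw [hρ1, hwg] at h'
            exact_mod_cast h'
          rw [hwg, hwu, ← Nat.cast_add]
          exact_mod_cast Nat.add_pos_left hpos m
        have hhne : h ≠ 0 := hMne h hhM
        obtain ⟨hfh_ne, -⟩ := hmul h hhne
        have hσfg' : σ.w (f * g) = (n : WithBot ℕ) := by rw [σ.wval hfg_ne, hn]
        have hfh_le : σ.w (f * h) ≤ (n : WithBot ℕ) := by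
          have hrw : f * h = (f * g) * u := by rw [hhdef]; ring
          rw [hrw]
          calc σ.w ((f * g) * u) ≤ σ.w (f * g) + σ.w u := σ.N5 _ _
            _ = (n : WithBot ℕ) := by rw [hσfg', hσu, add_zero]
        have hk : σ.w (f * h) = (σ.nval (f * h) : WithBot ℕ) := σ.wval hfh_ne
        have hkn : σ.nval (f * h) ≤ n := by
          rw [hk] at hfh_le; exact_mod_cast hfh_le
        rcases lt_or_eq_of_le hkn with hlt | heq
        · exact ih _ hlt h hhM rfl
        · -- equal σ-values : apply N4
          have hfgM : σ.w 1 < σ.w (f * g) := by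
            rw [hσ1, hσfg']; exact_mod_cast hnpos
          have hfhM : σ.w 1 < σ.w (f * h) := by
            rw [hσ1, hk, heq]; exact_mod_cast hnpos
          have heqw : σ.w (f * g) = σ.w (f * h) := by rw [hσfg', hk, heq]
          obtain ⟨c, hc0, hclt⟩ := σ.N4 (f * g) (f * h) hfgM hfhM heqw
          set g' := g - c • h with hg'def
          have hrw : f * g' = f * g - c • (f * h) := by
            rw [hg'def, mul_sub, mul_smul_comm]
          have hglt : ρ.w g < ρ.w (c • h) := by
            rw [ρ.N1 c h hc0]
            show ρ.w g < ρ.w h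
            rw [ρ.N5' g u hgM huM, ρ.wval hgne, hwu, ← Nat.cast_add]
            exact_mod_cast Nat.lt_add_of_pos_right hm0
          have hρg' : ρ.w g' = ρ.w h := by
            rw [hg'def, ρ.w_sub_eq hglt, ρ.N1 c h hc0]
          have hg'M : g' ∈ ρ.M := by
            show ρ.w 1 < ρ.w g'
            rw [hρg']; exact hhM
          have hg'ne : g' ≠ 0 := hMne g' hg'M
          obtain ⟨hfg'_ne, -⟩ := hmul g' hg'ne
          have hlt' : σ.w (f * g') < (n : WithBot ℕ) := by
            rw [hrw]; rw [hσfg'] at hclt; exact hclt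
          have hkk : σ.nval (f * g') < n := by
            rw [σ.wval hfg'_ne] at hlt'; exact_mod_cast hlt'
          exact ih _ hkk g' hg'M rfl
  exact key _ u huM rfl
end

section
/- Let ρ and σ be two well agreeing near weights on R. Then for all f ∈ R \ {0}: (1) ρ̃(f) = ρ(fg) − ρ(g) for every g ∈ M_ρ such that fg ∈ M_ρ; (2) if f ∈ M_ρ then ρ̃(f) = ρ(f) > 0, and if f ∈ U_ρ \ {0} then ρ̃(f) ≤ 0; (3) ρ̃(λ·1) = 0 for every λ ∈ F \ {0}. -/
variable {F R : Type*} [Field F] [CommRing R] [Algebra F R]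

lemma aux_one_ne (hinj : Function.Injective (algebraMap F R)) : (1 : R) ≠ 0 := by
  intro h
  have h2 : algebraMap F R 1 = algebraMap F R 0 := by simpa using h
  exact one_ne_zero (hinj h2)

lemma aux_wne (ρ : NearWeight F R) {f : R} (hf : f ≠ 0) :
    ρ.w f = (ρ.nval f : WithBot ℕ) := by
  have hb : ρ.w f ≠ ⊥ := fun h => hf ((ρ.N0 f).mp h)
  obtain ⟨n, hn⟩ := WithBot.ne_bot_iff_exists.mp hb
  rw [← hn]
  have : ρ.nval f = n := by simp [NearWeight.nval, ← hn]
  rw [this]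
  norm_cast

lemma aux_Mne0 (ρ : NearWeight F R) {g : R} (hg : g ∈ ρ.M) : g ≠ 0 := by
  intro h
  have hlt : ρ.w 1 < ρ.w g := hg
  rw [h, (ρ.N0 0).mpr rfl] at hlt
  exact not_lt_bot hlt

lemma aux_nval_pos (hinj : Function.Injective (algebraMap F R))
    (ρ : NearWeight F R) {g : R} (hg : g ∈ ρ.M) : 0 < ρ.nval g := by
  have h1 : ρ.w 1 = 0 := ρ.norm0 1 (aux_one_ne hinj) le_rfl
  have hlt : ρ.w 1 < ρ.w g := hg
  rw [h1, aux_wne ρ (aux_Mne0 ρ hg)] at hlt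
  exact_mod_cast hlt

lemma aux_mulM (hinj : Function.Injective (algebraMap F R))
    (ρ : NearWeight F R) {f g : R} (hf : f ∈ ρ.M) (hg : g ∈ ρ.M) :
    f * g ∈ ρ.M ∧ ρ.nval (f * g) = ρ.nval f + ρ.nval g := by
  have h5 := ρ.N5' f g hf hg
  rw [aux_wne ρ (aux_Mne0 ρ hf), aux_wne ρ (aux_Mne0 ρ hg)] at h5
  have hco : ρ.w (f * g) = ((ρ.nval f + ρ.nval g : ℕ) : WithBot ℕ) := by
    rw [h5]; push_cast; ring
  have hne : f * g ≠ 0 := by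
    intro h
    rw [h, (ρ.N0 0).mpr rfl] at hco
    exact absurd hco.symm (by simp)
  have h1 : ρ.w 1 = 0 := ρ.norm0 1 (aux_one_ne hinj) le_rfl
  have hM : f * g ∈ ρ.M := by
    show ρ.w 1 < ρ.w (f * g)
    rw [h1, hco]
    have := aux_nval_pos hinj ρ hf
    exact_mod_cast Nat.add_pos_left this _
  refine ⟨hM, ?_⟩
  have := aux_wne ρ hne
  rw [this] at hco
  exact_mod_cast hco

lemma aux_key (hinj : Function.Injective (algebraMap F R))
    (ρ : NearWeight F R) {f g₀ g : R} (hg₀ : g₀ ∈ ρ.M) (hfg₀ : f * g₀ ∈ ρ.M)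
    (hg : g ∈ ρ.M) :
    ρ.nval (f * g₀) + ρ.nval g ≤ ρ.nval (f * g) + ρ.nval g₀ := by
  obtain ⟨hmem, heqv⟩ := aux_mulM hinj ρ hfg₀ hg
  have h5 := ρ.N5 (f * g) g₀
  have heq : f * g * g₀ = f * g₀ * g := by ring
  rw [heq, aux_wne ρ (aux_Mne0 ρ hmem), heqv] at h5
  have hne : f * g ≠ 0 := by
    intro h
    rw [h, (ρ.N0 0).mpr rfl] at h5
    simp at h5
  rw [aux_wne ρ hne, aux_wne ρ (aux_Mne0 ρ hg₀)] at h5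
  have h5' : ((ρ.nval (f * g₀) + ρ.nval g : ℕ) : WithBot ℕ) ≤
      ((ρ.nval (f * g) + ρ.nval g₀ : ℕ) : WithBot ℕ) := by
    refine le_trans (le_of_eq ?_) (le_trans h5 (le_of_eq ?_)) <;> push_cast <;> ring
  exact_mod_cast h5'

theorem stmt17
    (hinj : Function.Injective (algebraMap F R))
    (hsur : ¬ Function.Surjective (algebraMap F R))
    (ρ σ : NearWeight F R) (hwa : NearWeight.WellAgreeing ρ σ) :
    (∀ f : R, f ≠ 0 →
      (∀ g ∈ ρ.M, f * g ∈ ρ.M →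
        NearWeight.tw ρ f = (ρ.nval (f * g) : ℤ) - (ρ.nval g : ℤ)) ∧
      (f ∈ ρ.M → NearWeight.tw ρ f = (ρ.nval f : ℤ) ∧ 0 < NearWeight.tw ρ f) ∧
      (f ∈ ρ.U → NearWeight.tw ρ f ≤ 0)) ∧
    (∀ c : F, c ≠ 0 → NearWeight.tw ρ (c • (1 : R)) = 0) := by
  have h1R : (1 : R) ≠ 0 := aux_one_ne hinj
  have hw1 : ρ.w 1 = 0 := ρ.norm0 1 h1R le_rfl
  obtain ⟨m, hm⟩ : ρ.M.Nonempty := by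
    by_contra hM
    have h2 := ρ.normgcd 2 (fun f hf => absurd ⟨f, hf⟩ hM)
    norm_num at h2
  have part1 : ∀ f : R, ∀ g ∈ ρ.M, f * g ∈ ρ.M →
      NearWeight.tw ρ f = (ρ.nval (f * g) : ℤ) - (ρ.nval g : ℤ) := by
    intro f g hg hfg
    apply IsLeast.csInf_eq
    constructor
    · exact ⟨g, hg, rfl⟩
    · rintro z ⟨g', hg', rfl⟩
      have := aux_key hinj ρ hg hfg hg'
      omega
  constructor
  · intro f hf
    refine ⟨fun g hg hfg => part1 f g hg hfg, ?_, ?_⟩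
    · intro hfM
      obtain ⟨hmem, heqv⟩ := aux_mulM hinj ρ hfM hm
      have h := part1 f m hm hmem
      rw [h, heqv]
      have hpos := aux_nval_pos hinj ρ hfM
      constructor <;> [push_cast; skip] <;> omega
    · intro hfU
      have hf0 : ρ.w f = 0 := ρ.norm0 f hf hfU
      by_cases hbdd : BddBelow {z : ℤ | ∃ g ∈ ρ.M, z = (ρ.nval (f * g) : ℤ) - (ρ.nval g : ℤ)}
      · have h5 := ρ.N5 f m
        rw [hf0, zero_add] at h5
        have hle : ρ.nval (f * m) ≤ ρ.nval m := by
          by_cases hfm : f * m = 0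
          · unfold NearWeight.nval
            rw [hfm, (ρ.N0 0).mpr rfl]
            simp
          · rw [aux_wne ρ hfm, aux_wne ρ (aux_Mne0 ρ hm)] at h5
            exact_mod_cast h5
        have hmem : (ρ.nval (f * m) : ℤ) - (ρ.nval m : ℤ) ∈
            {z : ℤ | ∃ g ∈ ρ.M, z = (ρ.nval (f * g) : ℤ) - (ρ.nval g : ℤ)} :=
          ⟨m, hm, rfl⟩
        have := csInf_le hbdd hmem
        unfold NearWeight.tw
        omega
      · unfold NearWeight.tw
        rw [Int.csInf_of_not_bddBelow hbdd]
  · intro c hc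
    have hset : {z : ℤ | ∃ g ∈ ρ.M, z = (ρ.nval ((c • (1:R)) * g) : ℤ) - (ρ.nval g : ℤ)} = {0} := by
      have hval : ∀ g : R, ρ.nval ((c • (1:R)) * g) = ρ.nval g := by
        intro g
        have hmul : (c • (1 : R)) * g = c • g := by rw [smul_mul_assoc, one_mul]
        rw [hmul]
        unfold NearWeight.nval
        rw [ρ.N1 c g hc]
      ext z
      simp only [Set.mem_setOf_eq, Set.mem_singleton_iff]
      constructor
      · rintro ⟨g, hg, rfl⟩
        rw [hval g]; ring
      · intro hz
        exact ⟨m, hm, by rw [hval m, hz]; ring⟩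
    unfold NearWeight.tw
    rw [hset, csInf_singleton]
end

section
/- Let R be a commutative F-algebra admitting two well agreeing near weights ρ and σ, so that R is an integral domain, and let K be its field of fractions. Then there is a well-defined discrete valuation v_ρ : K → ℤ ∪ {∞} of K over F, given by v_ρ(0) := ∞ and v_ρ(f/g) := ρ̃(g) − ρ̃(f) for f, g ∈ R \ {0}; that is, v_ρ satisfies v_ρ(xy) = v_ρ(x) + v_ρ(y), v_ρ(x + y) ≥ min{v_ρ(x), v_ρ(y)}, v_ρ(x) = ∞ iff x = 0, v_ρ(λ) = 0 for every λ ∈ F \ {0}, and v_ρ maps K \ {0} onto ℤ. -/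
namespace NearWeight

variable {F R : Type*} [Field F] [CommRing R] [Algebra F R]

variable (ρ : NearWeight F R)

lemma w_ne_bot {f : R} (hf : f ≠ 0) : ρ.w f ≠ ⊥ := fun h => hf ((ρ.N0 f).1 h)

lemma w_eq_nval {f : R} (hf : f ≠ 0) : ρ.w f = (ρ.nval f : WithBot ℕ) := by
  cases h : ρ.w f with
  | bot => exact absurd h (ρ.w_ne_bot hf)
  | coe n => simp [nval, h]; rfl

lemma w_one_s19 [Nontrivial R] : ρ.w 1 = 0 :=
  ρ.norm0 1 one_ne_zero le_rfl

lemma mem_M_iff [Nontrivial R] {f : R} : f ∈ ρ.M ↔ 0 < ρ.w f := by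
  rw [M, Set.mem_setOf_eq, ρ.w_one_s19]

lemma M_ne_zero [Nontrivial R] {f : R} (hf : f ∈ ρ.M) : f ≠ 0 := by
  intro h
  rw [ρ.mem_M_iff, h, (ρ.N0 0).2 rfl] at hf
  exact absurd hf (by simp)

lemma M_nonempty [Nontrivial R] : ∃ m, m ∈ ρ.M := by
  by_contra h
  push_neg at h
  have := ρ.normgcd 0 (fun f hf => absurd hf (h f))
  simp at this

lemma w_mul_M [Nontrivial R] {f g : R} (hf : f ∈ ρ.M) (hg : g ∈ ρ.M) :
    ρ.w (f * g) = ρ.w f + ρ.w g := by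
  rw [M, Set.mem_setOf_eq] at hf hg
  exact ρ.N5' f g hf hg

lemma mul_mem_M [Nontrivial R] {f g : R} (hf : f ∈ ρ.M) (hg : g ∈ ρ.M) : f * g ∈ ρ.M := by
  have hf0 := ρ.M_ne_zero hf
  have hg0 := ρ.M_ne_zero hg
  have h := ρ.w_mul_M hf hg
  rw [mem_M_iff] at hf hg ⊢
  rw [h, ρ.w_eq_nval hf0, ρ.w_eq_nval hg0]
  rw [ρ.w_eq_nval hf0] at hf
  rw [ρ.w_eq_nval hg0] at hg
  have hf' : 0 < ρ.nval f := by exact_mod_cast hf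
  have hg' : 0 < ρ.nval g := by exact_mod_cast hg
  have : ((ρ.nval f : ℕ) : WithBot ℕ) + (ρ.nval g : WithBot ℕ) = ((ρ.nval f + ρ.nval g : ℕ) : WithBot ℕ) := by
    push_cast; ring
  rw [this]
  exact_mod_cast Nat.add_pos_left hf' _

lemma w_neg_s19 (f : R) : ρ.w (-f) = ρ.w f := by
  have := ρ.N1 (-1 : F) f (by norm_num)
  rwa [neg_one_smul] at this

lemma w_add_eq_right {x y : R} (h : ρ.w x < ρ.w y) : ρ.w (x + y) = ρ.w y := by
  refine le_antisymm (le_trans (ρ.N2 x y) (by simp [le_of_lt h])) ?_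
  by_contra hlt
  push_neg at hlt
  have h2 : ρ.w y ≤ max (ρ.w (x + y)) (ρ.w (-x)) := by
    have := ρ.N2 (x + y) (-x)
    simpa using this
  rw [ρ.w_neg_s19] at h2
  rcases max_cases (ρ.w (x + y)) (ρ.w x) with ⟨he, _⟩ | ⟨he, _⟩ <;> rw [he] at h2
  · exact absurd (lt_of_le_of_lt h2 hlt) (lt_irrefl _)
  · exact absurd (lt_of_le_of_lt h2 h) (lt_irrefl _)

lemma w_sub_smul_eq {x y : R} {c : F} (hc : c ≠ 0) (h : ρ.w x < ρ.w y) :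
    ρ.w (x - c • y) = ρ.w y := by
  have h1 : ρ.w (-(c • y)) = ρ.w y := by rw [ρ.w_neg_s19, ρ.N1 c y hc]
  have h2 : ρ.w x < ρ.w (-(c • y)) := h1 ▸ h
  calc ρ.w (x - c • y) = ρ.w (x + -(c • y)) := by ring_nf
    _ = ρ.w (-(c • y)) := ρ.w_add_eq_right h2
    _ = ρ.w y := h1


lemma w_sub_smul_eq_left {x y : R} {c : F} (hc : c ≠ 0) (h : ρ.w y < ρ.w x) :
    ρ.w (x - c • y) = ρ.w x := by
  have h1 : ρ.w (-(c • y)) = ρ.w y := by rw [ρ.w_neg_s19, ρ.N1 c y hc]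
  have h2 : ρ.w (-(c • y)) < ρ.w x := h1 ▸ h
  calc ρ.w (x - c • y) = ρ.w (-(c • y) + x) := by ring_nf
    _ = ρ.w x := ρ.w_add_eq_right h2

lemma nval_pos [Nontrivial R] {f : R} (hf : f ∈ ρ.M) : 0 < ρ.nval f := by
  have h := (ρ.mem_M_iff).1 hf
  rw [ρ.w_eq_nval (ρ.M_ne_zero hf)] at h
  exact_mod_cast h

lemma mem_M_of_nval [Nontrivial R] {f : R} (hf : f ≠ 0) (h : 0 < ρ.nval f) : f ∈ ρ.M := by
  rw [mem_M_iff, ρ.w_eq_nval hf]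
  exact_mod_cast h

variable {ρ} {σ : NearWeight F R}

lemma row_witness (hfin : (Hset ρ σ Set.univ)ᶜ.Finite) (b : ℕ) {A : Set ℕ} (hA : A.Finite) :
    ∃ g : R, g ≠ 0 ∧ ρ.nval g ∉ A ∧ σ.nval g = b := by
  have hpre : {a : ℕ | (a, b) ∉ Hset ρ σ Set.univ}.Finite := by
    have he : {a : ℕ | (a, b) ∉ Hset ρ σ Set.univ} = (fun a => (a, b)) ⁻¹' (Hset ρ σ Set.univ)ᶜ := rfl
    rw [he]
    refine Set.Finite.preimage (Function.Injective.injOn ?_) hfin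
    intro x y hxy
    exact congrArg Prod.fst hxy
  obtain ⟨a, ha⟩ := ((hpre.union hA).infinite_compl).nonempty
  rw [Set.mem_compl_iff, Set.mem_union] at ha
  push_neg at ha
  obtain ⟨h1, h2⟩ := ha
  rw [Set.mem_setOf_eq, not_not] at h1
  obtain ⟨g, _, hg0, hg⟩ := h1
  refine ⟨g, hg0, ?_, ?_⟩
  · rw [show ρ.nval g = a from congrArg Prod.fst hg]; exact h2
  · exact congrArg Prod.snd hg

lemma exists_dstar [IsDomain R] (hfin : (Hset ρ σ Set.univ)ᶜ.Finite) :
    ∃ d : R, d ∈ ρ.M ∧ σ.w d ≤ 0 := by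
  obtain ⟨m, hm⟩ := ρ.M_nonempty
  suffices h : ∀ b : ℕ, ∀ d : R, d ∈ ρ.M → σ.nval d = b → ∃ d', d' ∈ ρ.M ∧ σ.w d' ≤ 0 by
    exact h (σ.nval m) m hm rfl
  intro b
  induction b using Nat.strong_induction_on with
  | _ b IH =>
    intro d hd hb
    by_cases hσd : σ.w d ≤ 0
    · exact ⟨d, hd, hσd⟩
    push_neg at hσd
    have hd0 : d ≠ 0 := ρ.M_ne_zero hd
    have hdM : d ∈ σ.M := (σ.mem_M_iff).2 hσd
    have hbpos : 0 < b := hb ▸ σ.nval_pos hdM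
    obtain ⟨d', hd'0, hd'A, hd'b⟩ := row_witness hfin b ((Set.finite_singleton (ρ.nval d)).insert 0)
    rw [Set.mem_insert_iff, Set.mem_singleton_iff] at hd'A
    push_neg at hd'A
    have hd'M : d' ∈ ρ.M := ρ.mem_M_of_nval hd'0 (Nat.pos_of_ne_zero hd'A.1)
    have hd'Mσ : d' ∈ σ.M := σ.mem_M_of_nval hd'0 (by rw [hd'b]; exact hbpos)
    have heq : σ.w d = σ.w d' := by
      rw [σ.w_eq_nval hd0, σ.w_eq_nval hd'0, hb, hd'b]
    obtain ⟨c, hc, hlt⟩ := σ.N4 d d' hdM hd'Mσ heq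
    set d₂ := d - c • d' with hd₂def
    have hd₂M : d₂ ∈ ρ.M := by
      rcases lt_or_gt_of_ne hd'A.2 with hcase | hcase
    -- hcase : nval d' < nval d  or  >
      · have : ρ.w d' < ρ.w d := by
          rw [ρ.w_eq_nval hd0, ρ.w_eq_nval hd'0]; exact_mod_cast hcase
        rw [mem_M_iff, hd₂def, ρ.w_sub_smul_eq_left hc this]
        exact (ρ.mem_M_iff).1 hd
      · have : ρ.w d < ρ.w d' := by
          rw [ρ.w_eq_nval hd0, ρ.w_eq_nval hd'0]; exact_mod_cast hcase
        rw [mem_M_iff, hd₂def, ρ.w_sub_smul_eq hc this]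
        exact (ρ.mem_M_iff).1 hd'M
    have hd₂0 : d₂ ≠ 0 := ρ.M_ne_zero hd₂M
    by_cases hσ2 : σ.w d₂ ≤ 0
    · exact ⟨d₂, hd₂M, hσ2⟩
    · push_neg at hσ2
      have hlt' : σ.nval d₂ < b := by
        rw [σ.w_eq_nval hd₂0, σ.w_eq_nval hd0, hb] at hlt
        exact_mod_cast hlt
      exact IH _ hlt' d₂ hd₂M rfl


lemma ne_zero_of_w_pos {t : R} (h : 0 < ρ.w t) : t ≠ 0 := by
  rintro rfl
  rw [(ρ.N0 0).2 rfl] at h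
  exact absurd h (by simp)

variable [IsDomain R]

lemma not_unit_aux {f u : R} (hu : u ≠ 0) (c : F) (hc : c ≠ 0)
    (hfu : f * u = algebraMap F R c) (hP : ∀ r : R, r ≠ 0 → ρ.w (f * r) ≤ 0) : False := by
  obtain ⟨m, hm⟩ := ρ.M_nonempty
  have hm0 := ρ.M_ne_zero hm
  have key : f * (c⁻¹ • (u * m)) = m := by
    rw [mul_smul_comm, ← mul_assoc, hfu, ← Algebra.smul_def, smul_smul,
      inv_mul_cancel₀ hc, one_smul]
  have h2 := hP _ (smul_ne_zero (inv_ne_zero hc) (mul_ne_zero hu hm0))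
  rw [key] at h2
  exact absurd ((ρ.mem_M_iff).1 hm) (not_lt.2 h2)

lemma mem_inter_U {f : R} (hf : f ≠ 0) (h1 : ρ.w f ≤ 0) (h2 : σ.w f ≤ 0)
    (hwa : WellAgreeing ρ σ) : ∃ c : F, c ≠ 0 ∧ f = algebraMap F R c := by
  have hmem : f ∈ ρ.U ∩ σ.U := by
    constructor
    · rw [U, Set.mem_setOf_eq, ρ.w_one_s19]; exact h1
    · rw [U, Set.mem_setOf_eq, σ.w_one_s19]; exact h2
  rw [hwa.2] at hmem
  obtain ⟨c, hc⟩ := hmem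
  refine ⟨c, ?_, hc.symm⟩
  rintro rfl
  rw [map_zero] at hc
  exact hf hc.symm

lemma companion_core (hwa : WellAgreeing ρ σ) :
    ∀ s : ℕ, ∀ f : R, f ≠ 0 → σ.nval f = s → 0 < σ.w f →
      (∀ r : R, r ≠ 0 → ρ.w (f * r) ≤ 0) → False := by
  intro s
  induction s using Nat.strong_induction_on with
  | _ s IH =>
    intro f hf0 hs hσf hP
    obtain ⟨d, hdM, hdσ⟩ := exists_dstar (ρ := ρ) (σ := σ) hwa.1
    have hd0 := ρ.M_ne_zero hdM
    set f₁ := f * d with hf₁def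
    have hf₁0 : f₁ ≠ 0 := mul_ne_zero hf0 hd0
    have hρf₁ : ρ.w f₁ ≤ 0 := hP d hd0
    have hP₁ : ∀ r : R, r ≠ 0 → ρ.w (f₁ * r) ≤ 0 := by
      intro r hr
      rw [hf₁def, mul_assoc]
      exact hP (d * r) (mul_ne_zero hd0 hr)
    by_cases hσ1 : σ.w f₁ ≤ 0
    · obtain ⟨c, hc, hceq⟩ := mem_inter_U hf₁0 hρf₁ hσ1 hwa
      exact ρ.not_unit_aux hd0 c hc hceq hP
    · push_neg at hσ1
      have hle : σ.w f₁ ≤ σ.w f := by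
        calc σ.w f₁ ≤ σ.w f + σ.w d := σ.N5 f d
          _ ≤ σ.w f + 0 := add_le_add le_rfl hdσ
          _ = σ.w f := add_zero _
      have hnv : σ.nval f₁ ≤ s := by
        rw [σ.w_eq_nval hf₁0, σ.w_eq_nval hf0, hs] at hle
        exact_mod_cast hle
      rcases lt_or_eq_of_le hnv with hlt | heq
      · exact IH _ hlt f₁ hf₁0 rfl hσ1 hP₁
      · -- σ.nval f₁ = s : use N4 on f, f₁
        have hweq : σ.w f = σ.w f₁ := by
          rw [σ.w_eq_nval hf₁0, σ.w_eq_nval hf0, hs, heq]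
        obtain ⟨c, hc, hlt4⟩ := σ.N4 f f₁ ((σ.mem_M_iff).2 hσf) ((σ.mem_M_iff).2 hσ1) hweq
        set t := 1 - c • d with htdef
        have hρt : ρ.w t = ρ.w d := by
          rw [htdef]
          exact ρ.w_sub_smul_eq hc (by rw [ρ.w_one_s19]; exact (ρ.mem_M_iff).1 hdM)
        have ht0 : t ≠ 0 := ρ.ne_zero_of_w_pos (by rw [hρt]; exact (ρ.mem_M_iff).1 hdM)
        have hfactor : f - c • f₁ = f * t := by
          rw [htdef, hf₁def, mul_sub, mul_one, mul_smul_comm]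
        set f₂ := f * t with hf₂def
        have hf₂0 : f₂ ≠ 0 := mul_ne_zero hf0 ht0
        have hρf₂ : ρ.w f₂ ≤ 0 := hP t ht0
        have hσf₂lt : σ.w f₂ < σ.w f := hfactor ▸ hlt4
        have hP₂ : ∀ r : R, r ≠ 0 → ρ.w (f₂ * r) ≤ 0 := by
          intro r hr
          rw [hf₂def, mul_assoc]
          exact hP (t * r) (mul_ne_zero ht0 hr)
        by_cases hσ2 : σ.w f₂ ≤ 0
        · obtain ⟨c', hc', hceq⟩ := mem_inter_U hf₂0 hρf₂ hσ2 hwa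
          exact ρ.not_unit_aux ht0 c' hc' hceq hP
        · push_neg at hσ2
          have hnv2 : σ.nval f₂ < s := by
            rw [σ.w_eq_nval hf₂0, σ.w_eq_nval hf0, hs] at hσf₂lt
            exact_mod_cast hσf₂lt
          exact IH _ hnv2 f₂ hf₂0 rfl hσ2 hP₂

lemma exists_companion (hwa : WellAgreeing ρ σ) {f : R} (hf0 : f ≠ 0) :
    ∃ h, h ∈ ρ.M ∧ f * h ∈ ρ.M := by
  by_contra hcon
  push_neg at hcon
  obtain ⟨m, hm⟩ := ρ.M_nonempty
  have hfnotM : f ∉ ρ.M := fun hfM => hcon m hm (ρ.mul_mem_M hfM hm)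
  have hρf : ρ.w f ≤ 0 := by
    rw [mem_M_iff, not_lt] at hfnotM
    exact hfnotM
  have hP : ∀ r : R, r ≠ 0 → ρ.w (f * r) ≤ 0 := by
    intro r hr
    by_cases hrM : r ∈ ρ.M
    · have := hcon r hrM
      rw [mem_M_iff, not_lt] at this
      exact this
    · rw [mem_M_iff, not_lt] at hrM
      calc ρ.w (f * r) ≤ ρ.w f + ρ.w r := ρ.N5 f r
        _ ≤ 0 := add_nonpos hρf hrM
  by_cases hσf : σ.w f ≤ 0
  · obtain ⟨c, hc, hceq⟩ := mem_inter_U hf0 hρf hσf hwa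
    refine hcon m hm ?_
    have : f * m = c • m := by rw [hceq, ← Algebra.smul_def]
    rw [mem_M_iff, this, ρ.N1 c m hc]
    exact (ρ.mem_M_iff).1 hm
  · push_neg at hσf
    exact companion_core hwa (σ.nval f) f hf0 rfl hσf hP


lemma nval_mul_M {f g : R} (hf : f ∈ ρ.M) (hg : g ∈ ρ.M) :
    ρ.nval (f * g) = ρ.nval f + ρ.nval g := by
  have h := ρ.w_mul_M hf hg
  have h0 : f * g ≠ 0 := mul_ne_zero (ρ.M_ne_zero hf) (ρ.M_ne_zero hg)
  rw [ρ.w_eq_nval h0, ρ.w_eq_nval (ρ.M_ne_zero hf), ρ.w_eq_nval (ρ.M_ne_zero hg)] at h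
  exact_mod_cast h

lemma tw_key {f h g : R} (hh : h ∈ ρ.M) (hfh : f * h ∈ ρ.M) (hg : g ∈ ρ.M) :
    ρ.nval (f * h) + ρ.nval g ≤ ρ.nval (f * g) + ρ.nval h := by
  have hf0 : f ≠ 0 := by
    rintro rfl
    exact ρ.M_ne_zero hfh (by ring)
  have hg0 := ρ.M_ne_zero hg
  have hh0 := ρ.M_ne_zero hh
  have h1 : ρ.w (f * h * g) = ρ.w (f * h) + ρ.w g := ρ.w_mul_M hfh hg
  have h2 : ρ.w (f * g * h) ≤ ρ.w (f * g) + ρ.w h := ρ.N5 _ _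
  have h3 : f * h * g = f * g * h := by ring
  rw [h3] at h1
  rw [h1] at h2
  rw [ρ.w_eq_nval (mul_ne_zero hf0 hh0), ρ.w_eq_nval (mul_ne_zero hf0 hg0),
    ρ.w_eq_nval hg0, ρ.w_eq_nval hh0] at h2
  have h4 : ((ρ.nval (f * h) + ρ.nval g : ℕ) : WithBot ℕ) ≤ ((ρ.nval (f * g) + ρ.nval h : ℕ) : WithBot ℕ) := by
    push_cast
    exact h2
  exact_mod_cast h4

lemma tw_isLeast {f h : R} (hh : h ∈ ρ.M) (hfh : f * h ∈ ρ.M) :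
    IsLeast {z : ℤ | ∃ g ∈ ρ.M, z = (ρ.nval (f * g) : ℤ) - (ρ.nval g : ℤ)}
      ((ρ.nval (f * h) : ℤ) - (ρ.nval h : ℤ)) := by
  constructor
  · exact ⟨h, hh, rfl⟩
  · rintro z ⟨g, hg, rfl⟩
    have := ρ.tw_key hh hfh hg
    have h5 : (ρ.nval (f * h) : ℤ) + ρ.nval g ≤ (ρ.nval (f * g) : ℤ) + ρ.nval h := by
      exact_mod_cast this
    linarith

lemma tw_eq {f h : R} (hh : h ∈ ρ.M) (hfh : f * h ∈ ρ.M) :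
    ρ.tw f = (ρ.nval (f * h) : ℤ) - (ρ.nval h : ℤ) :=
  (ρ.tw_isLeast hh hfh).csInf_eq

lemma tw_mem_M {h : R} (hh : h ∈ ρ.M) : ρ.tw h = (ρ.nval h : ℤ) := by
  obtain ⟨m, hm⟩ := ρ.M_nonempty
  rw [ρ.tw_eq hm (ρ.mul_mem_M hh hm), ρ.nval_mul_M hh hm]
  push_cast
  ring

lemma tw_one : ρ.tw (1 : R) = 0 := by
  obtain ⟨m, hm⟩ := ρ.M_nonempty
  have h1 : (1 : R) * m ∈ ρ.M := by rwa [one_mul]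
  rw [ρ.tw_eq hm h1, one_mul]
  ring

lemma tw_smul_one {c : F} (hc : c ≠ 0) : ρ.tw (c • (1 : R)) = 0 := by
  obtain ⟨m, hm⟩ := ρ.M_nonempty
  have hsm : (c • (1 : R)) * m = c • m := by rw [smul_mul_assoc, one_mul]
  have hmem : (c • (1 : R)) * m ∈ ρ.M := by
    rw [mem_M_iff, hsm, ρ.N1 c m hc]
    exact (ρ.mem_M_iff).1 hm
  rw [ρ.tw_eq hm hmem, hsm]
  have : ρ.nval (c • m) = ρ.nval m := by
    unfold nval
    rw [ρ.N1 c m hc]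
  rw [this]
  ring

lemma tw_mul (hwa : WellAgreeing ρ σ) {f g : R} (hf : f ≠ 0) (hg : g ≠ 0) :
    ρ.tw (f * g) = ρ.tw f + ρ.tw g := by
  obtain ⟨h₁, hh₁, hfh₁⟩ := exists_companion hwa hf
  obtain ⟨h₂, hh₂, hgh₂⟩ := exists_companion hwa hg
  have hh : h₁ * h₂ ∈ ρ.M := ρ.mul_mem_M hh₁ hh₂
  have hfg : f * g * (h₁ * h₂) ∈ ρ.M := by
    have : f * g * (h₁ * h₂) = (f * h₁) * (g * h₂) := by ring
    rw [this]
    exact ρ.mul_mem_M hfh₁ hgh₂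
  rw [ρ.tw_eq hh hfg, ρ.tw_eq hh₁ hfh₁, ρ.tw_eq hh₂ hgh₂]
  have e1 : f * g * (h₁ * h₂) = (f * h₁) * (g * h₂) := by ring
  rw [e1, ρ.nval_mul_M hfh₁ hgh₂, ρ.nval_mul_M hh₁ hh₂]
  push_cast
  ring

lemma tw_add_le (hwa : WellAgreeing ρ σ) {f g : R} (hf : f ≠ 0) (hg : g ≠ 0) (hfg : f + g ≠ 0) :
    ρ.tw (f + g) ≤ max (ρ.tw f) (ρ.tw g) := by
  obtain ⟨h₁, hh₁, hfh₁⟩ := exists_companion hwa hf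
  obtain ⟨h₂, hh₂, hgh₂⟩ := exists_companion hwa hg
  have hh : h₁ * h₂ ∈ ρ.M := ρ.mul_mem_M hh₁ hh₂
  have hh0 := ρ.M_ne_zero hh
  have hfh : f * (h₁ * h₂) ∈ ρ.M := by
    have : f * (h₁ * h₂) = (f * h₁) * h₂ := by ring
    rw [this]; exact ρ.mul_mem_M hfh₁ hh₂
  have hgh : g * (h₁ * h₂) ∈ ρ.M := by
    have : g * (h₁ * h₂) = (g * h₂) * h₁ := by ring
    rw [this]; exact ρ.mul_mem_M hgh₂ hh₁
  set h := h₁ * h₂ with hhdef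
  -- tw (f+g) ≤ nval ((f+g)*h) - nval h
  obtain ⟨h₃, hh₃, hfgh₃⟩ := exists_companion hwa hfg
  have hbdd := (ρ.tw_isLeast hh₃ hfgh₃).bddBelow  -- maybe define
  have hmem : ((ρ.nval ((f + g) * h) : ℤ) - (ρ.nval h : ℤ)) ∈
      {z : ℤ | ∃ g' ∈ ρ.M, z = (ρ.nval ((f + g) * g') : ℤ) - (ρ.nval g' : ℤ)} := ⟨h, hh, rfl⟩
  have hle1 : ρ.tw (f + g) ≤ (ρ.nval ((f + g) * h) : ℤ) - (ρ.nval h : ℤ) :=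
    csInf_le ⟨_, (ρ.tw_isLeast hh₃ hfgh₃).2⟩ hmem
  -- nval ((f+g)*h) ≤ max (nval (f*h)) (nval (g*h))
  have hN2 : ρ.w ((f + g) * h) ≤ max (ρ.w (f * h)) (ρ.w (g * h)) := by
    have : (f + g) * h = f * h + g * h := by ring
    rw [this]
    exact ρ.N2 _ _
  have hfh0 : f * h ≠ 0 := ρ.M_ne_zero hfh
  have hgh0 : g * h ≠ 0 := ρ.M_ne_zero hgh
  have hfgh0 : (f + g) * h ≠ 0 := mul_ne_zero hfg hh0
  rw [ρ.w_eq_nval hfgh0, ρ.w_eq_nval hfh0, ρ.w_eq_nval hgh0] at hN2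
  have hN2' : ρ.nval ((f + g) * h) ≤ max (ρ.nval (f * h)) (ρ.nval (g * h)) := by
    rcases le_max_iff.1 hN2 with hc | hc
    · exact le_trans (by exact_mod_cast hc) (le_max_left _ _)
    · exact le_trans (by exact_mod_cast hc) (le_max_right _ _)
  rw [ρ.tw_eq hh₁ hfh₁, ρ.tw_eq hh₂ hgh₂]
  have e1 : (ρ.nval (f * h₁) : ℤ) - ρ.nval h₁ = (ρ.nval (f * h) : ℤ) - ρ.nval h := by
    have e : f * h = (f * h₁) * h₂ := by rw [hhdef]; ring
    rw [e, ρ.nval_mul_M hfh₁ hh₂, hhdef, ρ.nval_mul_M hh₁ hh₂]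
    push_cast; ring
  have e2 : (ρ.nval (g * h₂) : ℤ) - ρ.nval h₂ = (ρ.nval (g * h) : ℤ) - ρ.nval h := by
    have e : g * h = (g * h₂) * h₁ := by rw [hhdef]; ring
    rw [e, ρ.nval_mul_M hgh₂ hh₁, hhdef, ρ.nval_mul_M hh₁ hh₂]
    push_cast; ring
  rw [e1, e2]
  omega


lemma tw_surj (hwa : WellAgreeing ρ σ) (z : ℤ) :
    ∃ f g : R, f ≠ 0 ∧ g ≠ 0 ∧ ρ.tw g - ρ.tw f = z := by
  classical
  set gens : Set ℤ := {z | ∃ h ∈ ρ.M, (ρ.nval h : ℤ) = z} with hgens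
  obtain ⟨d, hd⟩ := Int.subgroup_cyclic (AddSubgroup.closure gens)
  have hdvd : ∀ h : R, h ∈ ρ.M → d ∣ (ρ.nval h : ℤ) := by
    intro h hh
    have hmem : ((ρ.nval h : ℤ)) ∈ AddSubgroup.closure gens :=
      AddSubgroup.subset_closure ⟨h, hh, rfl⟩
    rw [hd, AddSubgroup.mem_closure_singleton] at hmem
    obtain ⟨n, hn⟩ := hmem
    exact ⟨n, by rw [← hn]; rw [smul_eq_mul]; ring⟩
  have hone : d.natAbs = 1 := by
    apply ρ.normgcd
    intro f hf
    have hfM : f ∈ ρ.M := hf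
    have hdvd' : d.natAbs ∣ ρ.nval f := by
      have := (Int.natAbs_dvd.2 (hdvd f hfM))
      exact_mod_cast this
    obtain ⟨k, hk⟩ := hdvd'
    exact ⟨k, by rw [ρ.w_eq_nval (ρ.M_ne_zero hfM), hk]⟩
  have hdd : d * d = 1 := by
    rcases Int.natAbs_eq d with he | he <;> rw [hone] at he <;> rw [he] <;> ring
  have hzmem : z ∈ AddSubgroup.closure gens := by
    rw [hd, AddSubgroup.mem_closure_singleton]
    exact ⟨z * d, by rw [smul_eq_mul]; rw [mul_assoc, hdd, mul_one]⟩
  refine AddSubgroup.closure_induction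
    (p := fun x _ => ∃ f g : R, f ≠ 0 ∧ g ≠ 0 ∧ ρ.tw g - ρ.tw f = x) ?_ ?_ ?_ ?_ hzmem
  · rintro x ⟨h, hh, rfl⟩
    exact ⟨1, h, one_ne_zero, ρ.M_ne_zero hh, by rw [ρ.tw_mem_M hh, ρ.tw_one]; ring⟩
  · exact ⟨1, 1, one_ne_zero, one_ne_zero, by ring⟩
  · rintro x y hx hy ⟨f, g, hf, hg, rfl⟩ ⟨f', g', hf', hg', rfl⟩
    refine ⟨f * f', g * g', mul_ne_zero hf hf', mul_ne_zero hg hg', ?_⟩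
    rw [ρ.tw_mul hwa hg hg', ρ.tw_mul hwa hf hf']
    ring
  · rintro x hx ⟨f, g, hf, hg, rfl⟩
    exact ⟨g, f, hg, hf, by ring⟩

end NearWeight

variable {F R : Type*} [Field F] [CommRing R] [Algebra F R]

theorem stmt19 [IsDomain R]
    (hinj : Function.Injective (algebraMap F R))
    (hsur : ¬ Function.Surjective (algebraMap F R))
    (ρ σ : NearWeight F R) (hwa : NearWeight.WellAgreeing ρ σ) :
    ∃ v : FractionRing R → WithTop ℤ,
      v 0 = ⊤ ∧
      (∀ f g : R, f ≠ 0 → g ≠ 0 →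
        v (algebraMap R (FractionRing R) f / algebraMap R (FractionRing R) g) =
          ((NearWeight.tw ρ g - NearWeight.tw ρ f : ℤ) : WithTop ℤ)) ∧
      (∀ x y : FractionRing R, v (x * y) = v x + v y) ∧
      (∀ x y : FractionRing R, min (v x) (v y) ≤ v (x + y)) ∧
      (∀ x : FractionRing R, v x = ⊤ ↔ x = 0) ∧
      (∀ c : F, c ≠ 0 → v (algebraMap R (FractionRing R) (c • (1 : R))) = 0) ∧
      (∀ z : ℤ, ∃ x : FractionRing R, x ≠ 0 ∧ v x = (z : WithTop ℤ)) := by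
  classical
  have halg : ∀ r : R, r ≠ 0 → algebraMap R (FractionRing R) r ≠ 0 := fun r hr h =>
    hr (IsFractionRing.injective R (FractionRing R) (by rw [h, map_zero]))
  set v : FractionRing R → WithTop ℤ := fun x =>
    if x = 0 then ⊤
    else (((ρ.tw ((IsLocalization.sec (nonZeroDivisors R) x).2 : R) -
      ρ.tw (IsLocalization.sec (nonZeroDivisors R) x).1 : ℤ) : WithTop ℤ)) with hvdef
  have hv0 : v 0 = ⊤ := by rw [hvdef]; simp
  have hwd : ∀ x : FractionRing R, x ≠ 0 → ∀ f g : R, f ≠ 0 → g ≠ 0 →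
      x * algebraMap R (FractionRing R) g = algebraMap R (FractionRing R) f →
      v x = ((ρ.tw g - ρ.tw f : ℤ) : WithTop ℤ) := by
    intro x hx f g hf hg hxfg
    have hspec := IsLocalization.sec_spec (nonZeroDivisors R) x
    set a := (IsLocalization.sec (nonZeroDivisors R) x).1 with ha
    set b := (IsLocalization.sec (nonZeroDivisors R) x).2 with hb
    have hb0 : (b : R) ≠ 0 := nonZeroDivisors.coe_ne_zero b
    have ha0 : a ≠ 0 := by
      intro h0
      rw [h0, map_zero] at hspec
      rcases mul_eq_zero.1 hspec with h | h
      · exact hx h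
      · exact halg _ hb0 h
    have hcross : f * (b : R) = a * g := by
      apply IsFractionRing.injective R (FractionRing R)
      rw [map_mul, map_mul, ← hxfg, ← hspec]; ring
    have htw : ρ.tw f + ρ.tw (b : R) = ρ.tw a + ρ.tw g := by
      rw [← ρ.tw_mul hwa hf hb0, ← ρ.tw_mul hwa ha0 hg, hcross]
    have hvx : v x = ((ρ.tw (b : R) - ρ.tw a : ℤ) : WithTop ℤ) := by
      rw [hvdef]; simp only [if_neg hx]; rfl
    rw [hvx]
    exact congrArg (fun z : ℤ => (z : WithTop ℤ)) (by omega)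
  have hrep : ∀ x : FractionRing R, x ≠ 0 → ∃ a b : R, a ≠ 0 ∧ b ≠ 0 ∧
      x * algebraMap R (FractionRing R) b = algebraMap R (FractionRing R) a := by
    intro x hx
    have hspec := IsLocalization.sec_spec (nonZeroDivisors R) x
    refine ⟨_, _, ?_, nonZeroDivisors.coe_ne_zero _, hspec⟩
    intro h0
    rw [h0, map_zero] at hspec
    rcases mul_eq_zero.1 hspec with h | h
    exacts [hx h, halg _ (nonZeroDivisors.coe_ne_zero _) h]
  have hdiv : ∀ f g : R, f ≠ 0 → g ≠ 0 →
      v (algebraMap R (FractionRing R) f / algebraMap R (FractionRing R) g) =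
        ((ρ.tw g - ρ.tw f : ℤ) : WithTop ℤ) := by
    intro f g hf hg
    have hx : algebraMap R (FractionRing R) f / algebraMap R (FractionRing R) g ≠ 0 :=
      div_ne_zero (halg f hf) (halg g hg)
    exact hwd _ hx f g hf hg (div_mul_cancel₀ _ (halg g hg))
  have hmul : ∀ x y : FractionRing R, v (x * y) = v x + v y := by
    intro x y
    by_cases hx : x = 0
    · rw [hx, zero_mul, hv0, top_add]
    by_cases hy : y = 0
    · rw [hy, mul_zero, hv0, add_top]
    obtain ⟨a, b, ha, hb, hxs⟩ := hrep x hx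
    obtain ⟨c, d, hc, hd, hys⟩ := hrep y hy
    have hxy0 : x * y ≠ 0 := mul_ne_zero hx hy
    have hspec : (x * y) * algebraMap R (FractionRing R) (b * d) =
        algebraMap R (FractionRing R) (a * c) := by
      rw [map_mul, map_mul]
      calc x * y * (algebraMap R (FractionRing R) b * algebraMap R (FractionRing R) d)
          = (x * algebraMap R (FractionRing R) b) * (y * algebraMap R (FractionRing R) d) := by
            ring
        _ = _ := by rw [hxs, hys]
    rw [hwd _ hxy0 _ _ (mul_ne_zero ha hc) (mul_ne_zero hb hd) hspec,
      hwd x hx a b ha hb hxs, hwd y hy c d hc hd hys,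
      ρ.tw_mul hwa hb hd, ρ.tw_mul hwa ha hc, ← WithTop.coe_add]
    congr 1
    ring
  have haddv : ∀ x y : FractionRing R, min (v x) (v y) ≤ v (x + y) := by
    intro x y
    by_cases hxy : x + y = 0
    · rw [hxy, hv0]; exact le_top
    by_cases hx : x = 0
    · rw [hx, zero_add, hv0]
      exact min_le_right _ _
    by_cases hy : y = 0
    · rw [hy, add_zero, hv0]
      exact min_le_left _ _
    obtain ⟨a, b, ha, hb, hxs⟩ := hrep x hx
    obtain ⟨c, d, hc, hd, hys⟩ := hrep y hy
    have hspec : (x + y) * algebraMap R (FractionRing R) (b * d) =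
        algebraMap R (FractionRing R) (a * d + c * b) := by
      rw [map_mul, map_add, map_mul, map_mul]
      calc (x + y) * (algebraMap R (FractionRing R) b * algebraMap R (FractionRing R) d)
          = (x * algebraMap R (FractionRing R) b) * algebraMap R (FractionRing R) d +
            (y * algebraMap R (FractionRing R) d) * algebraMap R (FractionRing R) b := by ring
        _ = _ := by rw [hxs, hys]
    have hN : a * d + c * b ≠ 0 := by
      intro h0
      rw [h0, map_zero] at hspec
      rcases mul_eq_zero.1 hspec with h | h
      exacts [hxy h, halg _ (mul_ne_zero hb hd) h]
    rw [hwd _ hxy _ _ hN (mul_ne_zero hb hd) hspec, hwd x hx a b ha hb hxs,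
      hwd y hy c d hc hd hys]
    have h1 : ρ.tw (a * d + c * b) ≤ max (ρ.tw (a * d)) (ρ.tw (c * b)) :=
      ρ.tw_add_le hwa (mul_ne_zero ha hd) (mul_ne_zero hc hb) hN
    rw [ρ.tw_mul hwa ha hd, ρ.tw_mul hwa hc hb] at h1
    have h2 : ρ.tw (b * d) = ρ.tw b + ρ.tw d := ρ.tw_mul hwa hb hd
    rw [← WithTop.coe_min, WithTop.coe_le_coe]
    omega
  refine ⟨v, hv0, hdiv, hmul, haddv, ?_, ?_, ?_⟩
  · intro x
    constructor
    · intro h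
      by_contra hx
      rw [hvdef] at h
      simp only [if_neg hx] at h
      exact WithTop.coe_ne_top h
    · rintro rfl; exact hv0
  · intro c hc
    have h1 : c • (1 : R) ≠ 0 := smul_ne_zero hc one_ne_zero
    have h2 := hdiv (c • (1 : R)) 1 h1 one_ne_zero
    rw [map_one, div_one] at h2
    rw [h2, ρ.tw_one, ρ.tw_smul_one hc]
    rfl
  · intro z
    obtain ⟨f, g, hf, hg, hz⟩ := ρ.tw_surj hwa z
    refine ⟨algebraMap R (FractionRing R) f / algebraMap R (FractionRing R) g,
      div_ne_zero (halg f hf) (halg g hg), ?_⟩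
    rw [hdiv f g hf hg, hz]
end
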